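/- The square of a path Pₙ² satisfies MAG(Pₙ²) = n: the identity labelling vᵢ ↦ i+1 (0 ≤ i ≤ n−1) is an antimagic injection of Pₙ² into {1,...,n}. -/

import Mathlib

/-- `pathPower n k` is the `k`-th power `Pₙᵏ` of the path: vertices `0,…,n−1`,
with `i ∼ j` whenever `1 ≤ |i−j| ≤ k`. -/
def pathPower (n k : ℕ) : SimpleGraph (Fin n) where
  Adj i j := i ≠ j ∧ (i : ℕ) ≤ (j : ℕ) + k ∧ (j : ℕ) ≤ (i : ℕ) + k
  symm := ⟨fun _ _ ⟨h1, h2, h3⟩ => ⟨h1.symm, h3, h2⟩⟩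
  loopless := ⟨fun _ h => h.1 rfl⟩

/-- An injection `f : V(G) → ℤ⁺` is antimagic if distinct edges have distinct label sums. -/
def IsAntimagic {V : Type*} (G : SimpleGraph V) (f : V → ℕ) : Prop :=
  ∀ v w x y : V, G.Adj v w → G.Adj x y → s(v, w) ≠ s(x, y) → f v + f w ≠ f x + f y

/-- `MAG G`: the minimum `k` such that `G` has an antimagic injection into `{1,…,k}`. -/
noncomputable def MAG {V : Type*} (G : SimpleGraph V) : ℕ :=
  sInf {k | ∃ f : V → ℕ, Function.Injective f ∧ (∀ v, f v ∈ Finset.Icc 1 k) ∧ IsAntimagic G f}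

/-- The identity labelling `vᵢ ↦ i+1` is an antimagic injection of the square of a
path `Pₙ²` into `{1,…,n}`; hence `MAG(Pₙ²) = n`. -/
theorem mag_path_square (n : ℕ) :
    IsAntimagic (pathPower n 2) (fun i : Fin n => (i : ℕ) + 1) ∧
      MAG (pathPower n 2) = n := by
  have hanti : IsAntimagic (pathPower n 2) (fun i : Fin n => (i : ℕ) + 1) := by
    intro v w x y hvw hxy hne heq
    apply hne
    obtain ⟨h1, h2, h3⟩ := hvw
    obtain ⟨h4, h5, h6⟩ := hxy
    have h1' : (v : ℕ) ≠ w := fun h => h1 (Fin.ext h)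
    have h4' : (x : ℕ) ≠ y := fun h => h4 (Fin.ext h)
    simp only at heq
    have hcase : ((v : ℕ) = x ∧ (w : ℕ) = y) ∨ ((v : ℕ) = y ∧ (w : ℕ) = x) := by omega
    rcases hcase with ⟨ha, hb⟩ | ⟨ha, hb⟩
    · rw [Fin.ext ha, Fin.ext hb]
    · rw [Fin.ext ha, Fin.ext hb, Sym2.eq_swap]
  have hmemn : n ∈ {k | ∃ f : Fin n → ℕ, Function.Injective f ∧
      (∀ v, f v ∈ Finset.Icc 1 k) ∧ IsAntimagic (pathPower n 2) f} := by
    refine ⟨fun i => (i : ℕ) + 1, fun a b h => Fin.ext (by simpa using h), ?_, hanti⟩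
    intro v
    simp only [Finset.mem_Icc]
    have := v.isLt
    omega
  refine ⟨hanti, le_antisymm (Nat.sInf_le hmemn) ?_⟩
  refine le_csInf ⟨n, hmemn⟩ ?_
  intro k hk
  obtain ⟨f, hinj, hmem, -⟩ := hk
  have : Fintype.card (Fin n) ≤ Fintype.card (Finset.Icc 1 k) :=
    Fintype.card_le_of_injective (fun i => ⟨f i, hmem i⟩)
      (fun a b h => hinj (by simpa using h))
  simpa [Nat.card_Icc] using this
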